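/- For every positive integer N and every positive integer k, Σ_{n≠m, n,m=1}^{N} ∂_n^k ∂_m^k (∏_{i<j}(x_i - x_j)) = -Σ_{n=1}^{N} ∂_n^{2k} (∏_{i<j}(x_i - x_j)) = 0, where the products are Vandermonde determinants in x_1,...,x_N. -/
import Mathlib


/-- Partial derivative in direction `i` of a function of `N` real variables. -/
noncomputable def pd {N : ℕ} (i : Fin N) (g : (Fin N → ℝ) → ℝ) : (Fin N → ℝ) → ℝ :=
  fun x => fderiv ℝ g x (Pi.single i 1)

/-- Vandermonde product `∏_{i<j} (x i - x j)`. -/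
noncomputable def vand (N : ℕ) (x : Fin N → ℝ) : ℝ :=
  ∏ p ∈ Finset.univ.filter (fun p : Fin N × Fin N => p.1 < p.2), (x p.1 - x p.2)

section Aux

open MvPolynomial Finset

variable {N : ℕ}



lemma hasFDerivAt_eval {N : ℕ} (P : MvPolynomial (Fin N) ℝ) (x : Fin N → ℝ) :
    HasFDerivAt (fun y => eval y P)
      (∑ j, eval x (pderiv j P) • ContinuousLinearMap.proj (R := ℝ) (φ := fun _ : Fin N => ℝ) j)
      x := by
  induction P using MvPolynomial.induction_on with
  | C a =>
    simp only [eval_C, pderiv_C, map_zero, zero_smul, Finset.sum_const_zero]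
    exact hasFDerivAt_const (𝕜 := ℝ) a x
  | add p q hp hq =>
    simp only [map_add, add_smul, Finset.sum_add_distrib]
    exact hp.add hq
  | mul_X p n hp =>
    classical
    have hX : HasFDerivAt (fun y : Fin N → ℝ => y n)
        (ContinuousLinearMap.proj (R := ℝ) (φ := fun _ : Fin N => ℝ) n) x :=
      (ContinuousLinearMap.proj (R := ℝ) (φ := fun _ : Fin N => ℝ) n).hasFDerivAt
    have key : (∑ j, eval x (pderiv j (p * X n)) •
          ContinuousLinearMap.proj (R := ℝ) (φ := fun _ : Fin N => ℝ) j)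
        = eval x p • ContinuousLinearMap.proj (R := ℝ) (φ := fun _ : Fin N => ℝ) n
          + x n • ∑ j, eval x (pderiv j p) •
              ContinuousLinearMap.proj (R := ℝ) (φ := fun _ : Fin N => ℝ) j := by
      have h1 : ∀ j : Fin N, eval x (pderiv j (p * X n)) •
            ContinuousLinearMap.proj (R := ℝ) (φ := fun _ : Fin N => ℝ) j
          = (if n = j then eval x p •
              ContinuousLinearMap.proj (R := ℝ) (φ := fun _ : Fin N => ℝ) j else 0)
            + x n • (eval x (pderiv j p) •
              ContinuousLinearMap.proj (R := ℝ) (φ := fun _ : Fin N => ℝ) j) := by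
        intro j
        rw [pderiv_mul, pderiv_X]
        by_cases h : n = j <;>
          simp [h, Pi.single_apply, add_smul, smul_smul, mul_comm, add_comm]
      rw [Finset.sum_congr rfl fun j _ => h1 j, Finset.sum_add_distrib, Finset.sum_ite_eq,
        ← Finset.smul_sum]
      simp
    simp only [map_mul, eval_X]
    rw [key]
    exact hp.mul hX

lemma pd_eval {N : ℕ} (P : MvPolynomial (Fin N) ℝ) (i : Fin N) :
    pd i (fun y => eval y P) = fun y => eval y (pderiv i P) := by
  classical
  funext x
  have h := (hasFDerivAt_eval P x).fderiv
  simp only [pd, h]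
  rw [ContinuousLinearMap.sum_apply]
  rw [Finset.sum_congr rfl (fun j _ => by
    rw [ContinuousLinearMap.smul_apply, ContinuousLinearMap.proj_apply, Pi.single_apply,
      smul_eq_mul, mul_ite, mul_one, mul_zero] :
    ∀ j ∈ Finset.univ, (eval x (pderiv j P) •
      ContinuousLinearMap.proj (R := ℝ) (φ := fun _ : Fin N => ℝ) j) (Pi.single i 1)
      = if j = i then eval x (pderiv j P) else 0)]
  simp

lemma pd_iter_eval {N : ℕ} (P : MvPolynomial (Fin N) ℝ) (i : Fin N) (j : ℕ) :
    (pd i)^[j] (fun y => eval y P) = fun y => eval y ((pderiv i)^[j] P) := by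
  induction j generalizing P with
  | zero => rfl
  | succ j ih =>
    rw [Function.iterate_succ_apply, Function.iterate_succ_apply, pd_eval, ih]



/-- The Vandermonde polynomial. -/
noncomputable def VP (N : ℕ) : MvPolynomial (Fin N) ℝ :=
  ∏ p ∈ Finset.univ.filter (fun p : Fin N × Fin N => p.1 < p.2), (X p.1 - X p.2)

noncomputable def WD (N : ℕ) : MvPolynomial (Fin N) ℝ :=
  (Matrix.vandermonde (fun i : Fin N => (X i : MvPolynomial (Fin N) ℝ))).det

lemma VP_eq (N : ℕ) :
    VP N = (-1 : MvPolynomial (Fin N) ℝ) ^ (∑ i : Fin N, (Finset.Ioi i).card) * WD N := by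
  have h1 : VP N = ∏ i : Fin N, ∏ j ∈ Finset.Ioi i, (X i - X j) := by
    rw [VP]
    exact Finset.prod_finset_product' _ _ _
      (f := fun i j => (X i - X j : MvPolynomial (Fin N) ℝ)) (by simp)
  have h2 : ∀ i : Fin N, ∏ j ∈ Finset.Ioi i, (X i - X j)
      = (-1 : MvPolynomial (Fin N) ℝ) ^ (Finset.Ioi i).card *
        ∏ j ∈ Finset.Ioi i, (X j - X i) := by
    intro i
    rw [← Finset.prod_const, ← Finset.prod_mul_distrib]
    exact Finset.prod_congr rfl fun j _ => by ring
  rw [h1, Finset.prod_congr rfl fun i _ => h2 i, Finset.prod_mul_distrib,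
    Finset.prod_pow_eq_pow_sum, WD, Matrix.det_vandermonde]

lemma rename_swap_WD {a b : Fin N} (hab : a ≠ b) :
    rename (⇑(Equiv.swap a b)) (WD N) = -(WD N) := by
  have h := (rename (⇑(Equiv.swap a b)) : MvPolynomial (Fin N) ℝ →ₐ[ℝ]
      MvPolynomial (Fin N) ℝ).toRingHom.map_det
      (Matrix.vandermonde (fun i : Fin N => (X i : MvPolynomial (Fin N) ℝ)))
  have h2 : (Matrix.vandermonde (fun i : Fin N => (X i : MvPolynomial (Fin N) ℝ))).map
      (rename (⇑(Equiv.swap a b)) : MvPolynomial (Fin N) ℝ →ₐ[ℝ] MvPolynomial (Fin N) ℝ).toRingHom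
      = (Matrix.vandermonde (fun i : Fin N => (X i : MvPolynomial (Fin N) ℝ))).submatrix
          (⇑(Equiv.swap a b)) id := by
    ext i j
    simp [Matrix.vandermonde, Matrix.map_apply, Matrix.submatrix_apply]
  rw [WD] at *
  rw [show (rename (⇑(Equiv.swap a b))
      (Matrix.vandermonde fun i : Fin N => (X i : MvPolynomial (Fin N) ℝ)).det) =
      ((Matrix.vandermonde fun i : Fin N => (X i : MvPolynomial (Fin N) ℝ)).map
        (rename (⇑(Equiv.swap a b)) : MvPolynomial (Fin N) ℝ →ₐ[ℝ]
          MvPolynomial (Fin N) ℝ).toRingHom).det from h, h2,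
    Matrix.det_permute, Equiv.Perm.sign_swap hab]
  simp

lemma rename_swap_VP {a b : Fin N} (hab : a ≠ b) :
    rename (⇑(Equiv.swap a b)) (VP N) = -(VP N) := by
  rw [VP_eq, map_mul, map_pow, map_neg, map_one, rename_swap_WD hab]
  ring

lemma totalDegree_VP (N : ℕ) : (VP N).totalDegree ≤ ∑ i : Fin N, (i : ℕ) := by
  rw [VP_eq]
  refine (totalDegree_mul _ _).trans ?_
  have hc : ((-1 : MvPolynomial (Fin N) ℝ) ^ (∑ i : Fin N, (Finset.Ioi i).card)).totalDegree
      = 0 := by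
    have : ((-1 : MvPolynomial (Fin N) ℝ) ^ (∑ i : Fin N, (Finset.Ioi i).card))
        = C ((-1 : ℝ) ^ (∑ i : Fin N, (Finset.Ioi i).card)) := by
      rw [map_pow, map_neg, map_one]
    rw [this, totalDegree_C]
  rw [hc, zero_add]
  rw [WD, Matrix.det_apply']
  refine (totalDegree_finset_sum _ _).trans (Finset.sup_le fun σ _ => ?_)
  refine (totalDegree_mul _ _).trans ?_
  have hε : (((Equiv.Perm.sign σ : ℤ) : MvPolynomial (Fin N) ℝ)).totalDegree = 0 := by
    rw [show ((Equiv.Perm.sign σ : ℤ) : MvPolynomial (Fin N) ℝ)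
        = C ((Equiv.Perm.sign σ : ℤ) : ℝ) from
        (map_intCast (C : ℝ →+* MvPolynomial (Fin N) ℝ) _).symm, totalDegree_C]
  rw [hε, zero_add]
  refine (totalDegree_finset_prod _ _).trans ?_
  refine Finset.sum_le_sum fun i _ => ?_
  simp only [Matrix.vandermonde_apply]
  exact (totalDegree_pow _ _).trans (by rw [totalDegree_X]; omega)



lemma finsupp_sum_sub_single {m : Fin N →₀ ℕ} {i : Fin N} (h : 1 ≤ m i) :
    (m - Finsupp.single i 1).sum (fun _ e => e) + 1 = m.sum fun _ e => e := by
  classical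
  have hm : m = (m - Finsupp.single i 1) + Finsupp.single i 1 := by
    ext a
    simp only [Finsupp.coe_add, Finsupp.coe_tsub, Pi.add_apply, Pi.sub_apply,
      Finsupp.single_apply]
    split_ifs with hia
    · subst hia; omega
    · omega
  conv_rhs => rw [hm]
  rw [Finsupp.sum_add_index' (fun _ => rfl) (fun _ _ _ => rfl),
    Finsupp.sum_single_index rfl]

lemma totalDegree_pderiv_le (p : MvPolynomial (Fin N) ℝ) (i : Fin N) (e : ℕ)
    (h : p.totalDegree ≤ e + 1) : ((pderiv i) p).totalDegree ≤ e := by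
  classical
  conv_lhs => rw [← support_sum_monomial_coeff p]
  rw [map_sum]
  refine (totalDegree_finset_sum _ _).trans (Finset.sup_le fun m hm => ?_)
  rw [pderiv_monomial]
  by_cases hmi : m i = 0
  · simp [hmi]
  · refine (totalDegree_monomial_le _ _).trans ?_
    have h1 := finsupp_sum_sub_single (m := m) (i := i) (by omega)
    have h2 : (m.sum fun _ e => e) ≤ e + 1 := (le_totalDegree hm).trans h
    show ((m - Finsupp.single i 1).sum fun _ e => e) ≤ e
    omega

lemma totalDegree_pderiv_iter_le (p : MvPolynomial (Fin N) ℝ) (i : Fin N) (j : ℕ) :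
    ((pderiv i)^[j] p).totalDegree ≤ p.totalDegree := by
  induction j generalizing p with
  | zero => exact le_rfl
  | succ j ih =>
    rw [Function.iterate_succ_apply]
    exact (ih _).trans (totalDegree_pderiv_le _ _ _ (Nat.le_succ _))

lemma sum_distinct_ge (d : Fin N → ℕ) (hd : Function.Injective d) :
    ∑ i : Fin N, (i : ℕ) ≤ ∑ i, d i := by
  classical
  set s := Finset.univ.image d with hs
  have hcard : s.card = N := by
    rw [hs, Finset.card_image_of_injective _ hd, Finset.card_univ, Fintype.card_fin]
  set f := s.orderEmbOfFin hcard with hf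
  have hle' : ∀ v : ℕ, ∀ hv : v < N, v ≤ f ⟨v, hv⟩ := by
    intro v
    induction v with
    | zero => intro hv; exact Nat.zero_le _
    | succ v ih =>
      intro hv
      have hv' : v < N := by omega
      have h1 := f.strictMono (show (⟨v, hv'⟩ : Fin N) < ⟨v + 1, hv⟩ by
        simp [Fin.lt_def])
      have h2 := ih hv'
      omega
  have hle : ∀ i : Fin N, (i : ℕ) ≤ f i := fun i => hle' i.1 i.2
  have himg : Finset.univ.image (fun i => f i) = s := by
    ext y
    simp only [Finset.mem_image, Finset.mem_univ, true_and]
    constructor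
    · rintro ⟨i, rfl⟩; exact Finset.orderEmbOfFin_mem _ _ _
    · intro hy
      have : y ∈ Set.range f := by rw [Finset.range_orderEmbOfFin]; exact hy
      obtain ⟨i, hi⟩ := this
      exact ⟨i, hi⟩
  calc ∑ i : Fin N, (i : ℕ) ≤ ∑ i, f i := Finset.sum_le_sum fun i _ => hle i
    _ = ∑ y ∈ s, y := by
        rw [← himg, Finset.sum_image (fun a _ b _ h => f.injective h)]
    _ = ∑ i, d i := by
        rw [hs, Finset.sum_image (fun a _ b _ h => hd h)]

lemma alternating_small_eq_zero (P : MvPolynomial (Fin N) ℝ)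
    (halt : ∀ a b : Fin N, a ≠ b → rename (⇑(Equiv.swap a b)) P = -P)
    (hdeg : P.totalDegree < ∑ i : Fin N, (i : ℕ)) : P = 0 := by
  classical
  ext d
  rw [coeff_zero]
  by_cases hinj : Function.Injective fun i => d i
  · by_contra hne
    have hd : d ∈ P.support := mem_support_iff.mpr hne
    have h1 : (d.sum fun _ e => e) ≤ P.totalDegree := le_totalDegree hd
    have h2 : (d.sum fun _ e => e) = ∑ i, d i := Finsupp.sum_fintype _ _ fun _ => rfl
    have h3 : ∑ i : Fin N, (i : ℕ) ≤ ∑ i, d i := sum_distinct_ge (fun i => d i) hinj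
    omega
  · simp only [Function.Injective] at hinj
    push_neg at hinj
    obtain ⟨a, b, hab, hne⟩ := hinj
    have hmd : Finsupp.mapDomain (⇑(Equiv.swap a b)) d = d := by
      ext c
      rw [Finsupp.mapDomain_equiv_apply]
      rcases eq_or_ne c a with rfl | hca
      · simpa [Equiv.swap_apply_left, Equiv.symm_swap, Equiv.swap_apply_right] using hab.symm
      rcases eq_or_ne c b with rfl | hcb
      · simpa [Equiv.symm_swap, Equiv.swap_apply_right] using hab
      · rw [Equiv.symm_swap, Equiv.swap_apply_of_ne_of_ne hca hcb]
    have h1 := coeff_rename_mapDomain (⇑(Equiv.swap a b)) (Equiv.injective _) P d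
    rw [halt a b hne, hmd, coeff_neg] at h1
    linarith




lemma pderiv_iter_rename (τ : Equiv.Perm (Fin N)) (i : Fin N) (j : ℕ)
    (p : MvPolynomial (Fin N) ℝ) :
    (pderiv (τ i))^[j] (rename (⇑τ) p) = rename (⇑τ) ((pderiv i)^[j] p) := by
  induction j generalizing p with
  | zero => rfl
  | succ j ih =>
    rw [Function.iterate_succ_apply, Function.iterate_succ_apply,
      pderiv_rename τ.injective, ih]

lemma pderiv_iter_neg (i : Fin N) (j : ℕ) (p : MvPolynomial (Fin N) ℝ) :
    (pderiv i)^[j] (-p) = -((pderiv i)^[j] p) := by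
  induction j generalizing p with
  | zero => rfl
  | succ j ih => rw [Function.iterate_succ_apply, Function.iterate_succ_apply, map_neg, ih]

lemma pderiv_iter_zero (i : Fin N) (j : ℕ) :
    (pderiv i)^[j] (0 : MvPolynomial (Fin N) ℝ) = 0 := by
  induction j with
  | zero => rfl
  | succ j ih => rw [Function.iterate_succ_apply, map_zero, ih]

lemma VP_small (hN : N ≤ 1) : VP N = 1 := by
  rw [VP, Finset.filter_false_of_mem, Finset.prod_empty]
  intro p _
  rw [Fin.lt_def]
  have h1 := p.1.isLt
  have h2 := p.2.isLt
  omega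

lemma sum_val_pos (hN : 2 ≤ N) : 0 < ∑ i : Fin N, (i : ℕ) := by
  have h : (1 : ℕ) ≤ ∑ i : Fin N, (i : ℕ) := by
    have := Finset.single_le_sum (f := fun i : Fin N => (i : ℕ))
      (fun i _ => Nat.zero_le _) (Finset.mem_univ ⟨1, by omega⟩)
    simpa using this
  omega

theorem P2 (k : ℕ) (hk : 0 < k) :
    ∑ n : Fin N, (pderiv n)^[2 * k] (VP N) = 0 := by
  rcases le_or_gt N 1 with hN | hN
  · refine Finset.sum_eq_zero fun n _ => ?_
    obtain ⟨k', hk'⟩ : ∃ k', 2 * k = k' + 1 := ⟨2 * k - 1, by omega⟩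
    rw [hk', Function.iterate_succ_apply, VP_small hN, pderiv_one, pderiv_iter_zero]
  · set b := ∑ i : Fin N, (i : ℕ) with hb
    have hb1 : 1 ≤ b := sum_val_pos hN
    refine alternating_small_eq_zero _ ?_ ?_
    · intro a c hac
      rw [map_sum]
      have step : ∀ n : Fin N,
          rename (⇑(Equiv.swap a c)) ((pderiv n)^[2 * k] (VP N))
            = -((pderiv (Equiv.swap a c n))^[2 * k] (VP N)) := by
        intro n
        rw [← pderiv_iter_rename (Equiv.swap a c) n, rename_swap_VP hac, pderiv_iter_neg]
      rw [Finset.sum_congr rfl fun n _ => step n,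
        show (∑ n : Fin N, -((pderiv (Equiv.swap a c n))^[2 * k] (VP N)))
          = ∑ n : Fin N, -((pderiv n)^[2 * k] (VP N)) from
          Equiv.sum_comp (Equiv.swap a c) fun n => -((pderiv n)^[2 * k] (VP N)),
        Finset.sum_neg_distrib]
    · refine lt_of_le_of_lt ((totalDegree_finset_sum _ _).trans
        (Finset.sup_le fun n _ => ?_)) (show b - 1 < b by omega)
      obtain ⟨k', hk'⟩ : ∃ k', 2 * k = k' + 1 := ⟨2 * k - 1, by omega⟩
      rw [hk', Function.iterate_succ_apply]
      refine (totalDegree_pderiv_iter_le _ _ _).trans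
        (totalDegree_pderiv_le _ _ _ ?_)
      rw [show b - 1 + 1 = b by omega]
      exact totalDegree_VP N

theorem P1 (k : ℕ) (hk : 0 < k) :
    ∑ n : Fin N, ∑ m ∈ Finset.univ.erase n, (pderiv n)^[k] ((pderiv m)^[k] (VP N)) = 0 := by
  rcases le_or_gt N 1 with hN | hN
  · refine Finset.sum_eq_zero fun n _ => Finset.sum_eq_zero fun m _ => ?_
    obtain ⟨k', hk'⟩ : ∃ k', k = k' + 1 := ⟨k - 1, by omega⟩
    have hin : (pderiv m)^[k] (1 : MvPolynomial (Fin N) ℝ) = 0 := by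
      rw [hk', Function.iterate_succ_apply, pderiv_one, pderiv_iter_zero]
    rw [VP_small hN, hin, pderiv_iter_zero]
  · set b := ∑ i : Fin N, (i : ℕ) with hb
    have hb1 : 1 ≤ b := sum_val_pos hN
    refine alternating_small_eq_zero _ ?_ ?_
    · intro a c hac
      rw [map_sum]
      have step : ∀ n : Fin N,
          rename (⇑(Equiv.swap a c)) (∑ m ∈ Finset.univ.erase n,
              (pderiv n)^[k] ((pderiv m)^[k] (VP N)))
            = -∑ m ∈ Finset.univ.erase (Equiv.swap a c n),
                (pderiv (Equiv.swap a c n))^[k] ((pderiv m)^[k] (VP N)) := by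
        intro n
        rw [map_sum]
        have step2 : ∀ m : Fin N,
            rename (⇑(Equiv.swap a c)) ((pderiv n)^[k] ((pderiv m)^[k] (VP N)))
              = -((pderiv (Equiv.swap a c n))^[k]
                  ((pderiv (Equiv.swap a c m))^[k] (VP N))) := by
          intro m
          rw [← pderiv_iter_rename (Equiv.swap a c) n, ← pderiv_iter_rename (Equiv.swap a c) m,
            rename_swap_VP hac, pderiv_iter_neg, pderiv_iter_neg]
        rw [Finset.sum_congr rfl fun m _ => step2 m]
        have himg : (Finset.univ.erase n).image (⇑(Equiv.swap a c))
            = Finset.univ.erase (Equiv.swap a c n) := by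
          rw [Finset.image_erase (Equiv.injective _), Finset.image_univ_equiv]
        rw [show (∑ m ∈ Finset.univ.erase n, -((pderiv (Equiv.swap a c n))^[k]
              ((pderiv (Equiv.swap a c m))^[k] (VP N))))
            = ∑ m ∈ Finset.univ.erase (Equiv.swap a c n), -((pderiv (Equiv.swap a c n))^[k]
              ((pderiv m)^[k] (VP N))) from by
          rw [← himg, Finset.sum_image fun x _ y _ h => (Equiv.injective _) h],
          Finset.sum_neg_distrib]
      rw [Finset.sum_congr rfl fun n _ => step n,
        show (∑ n : Fin N, -∑ m ∈ Finset.univ.erase (Equiv.swap a c n),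
              (pderiv (Equiv.swap a c n))^[k] ((pderiv m)^[k] (VP N)))
          = ∑ n : Fin N, -∑ m ∈ Finset.univ.erase n,
              (pderiv n)^[k] ((pderiv m)^[k] (VP N)) from
          Equiv.sum_comp (Equiv.swap a c) fun n => -∑ m ∈ Finset.univ.erase n,
            (pderiv n)^[k] ((pderiv m)^[k] (VP N)),
        Finset.sum_neg_distrib]
    · refine lt_of_le_of_lt ((totalDegree_finset_sum _ _).trans
        (Finset.sup_le fun n _ => (totalDegree_finset_sum _ _).trans
          (Finset.sup_le fun m _ => ?_))) (show b - 1 < b by omega)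
      obtain ⟨k', hk'⟩ : ∃ k', k = k' + 1 := ⟨k - 1, by omega⟩
      refine (totalDegree_pderiv_iter_le _ _ _).trans ?_
      rw [hk', Function.iterate_succ_apply]
      refine (totalDegree_pderiv_iter_le _ _ _).trans
        (totalDegree_pderiv_le _ _ _ ?_)
      rw [show b - 1 + 1 = b by omega]
      exact totalDegree_VP N


lemma vand_eq_eval (N : ℕ) : vand N = fun y => eval y (VP N) := by
  funext y
  rw [vand, VP, map_prod]
  exact Finset.prod_congr rfl fun p _ => by rw [map_sub, eval_X, eval_X]

end Aux

/-- `∑_{n≠m} ∂_n^k ∂_m^k V = -∑_n ∂_n^{2k} V = 0` for the Vandermonde `V`. -/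
theorem stmt11 (N : ℕ) (k : ℕ) (hk : 0 < k) (x : Fin N → ℝ) :
    (∑ n : Fin N, ∑ m ∈ Finset.univ.erase n, (pd n)^[k] ((pd m)^[k] (vand N)) x)
        = - ∑ n : Fin N, (pd n)^[2 * k] (vand N) x
    ∧ (∑ n : Fin N, ∑ m ∈ Finset.univ.erase n, (pd n)^[k] ((pd m)^[k] (vand N)) x) = 0 := by
  open MvPolynomial in
  have hterm : ∀ n m : Fin N, (pd n)^[k] ((pd m)^[k] (vand N))
      = fun y => eval y ((pderiv n)^[k] ((pderiv m)^[k] (VP N))) := by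
    intro n m
    rw [vand_eq_eval, pd_iter_eval, pd_iter_eval]
  have hterm2 : ∀ n : Fin N, (pd n)^[2 * k] (vand N)
      = fun y => eval y ((pderiv n)^[2 * k] (VP N)) := by
    intro n
    rw [vand_eq_eval, pd_iter_eval]
  have hL : (∑ n : Fin N, ∑ m ∈ Finset.univ.erase n, (pd n)^[k] ((pd m)^[k] (vand N)) x)
      = 0 := by
    have h1 : (∑ n : Fin N, ∑ m ∈ Finset.univ.erase n, (pd n)^[k] ((pd m)^[k] (vand N)) x)
        = eval x (∑ n : Fin N, ∑ m ∈ Finset.univ.erase n,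
            (pderiv n)^[k] ((pderiv m)^[k] (VP N))) := by
      rw [map_sum]
      refine Finset.sum_congr rfl fun n _ => ?_
      rw [map_sum]
      exact Finset.sum_congr rfl fun m _ => by rw [hterm n m]
    rw [h1, P1 k hk, map_zero]
  have hR : (∑ n : Fin N, (pd n)^[2 * k] (vand N) x) = 0 := by
    have h1 : (∑ n : Fin N, (pd n)^[2 * k] (vand N) x)
        = eval x (∑ n : Fin N, (pderiv n)^[2 * k] (VP N)) := by
      rw [map_sum]
      exact Finset.sum_congr rfl fun n _ => by rw [hterm2 n]
    rw [h1, P2 k hk, map_zero]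
  exact ⟨by rw [hL, hR, neg_zero], hL⟩
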